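/- Let 𝒜 = {0,1} with weights p_1 = P(A=1), p_0 = 1 − p_1, feature distributions P_{X|a}, conditional probabilities η_a : X → [0,1], and c ∈ (0,1). Suppose there exist δ₁, δ₂ > 0 and t₁ > c such that P(c + δ₁ < η_1(X) < t₁ | A=1) ≥ δ₂, and suppose f_G, f_{NG} are classifiers with f_G(x,1) = 0 for all x with c < η_1(x) < t₁' for some t₁' ≥ t₁, and f_{NG}(x,1) = I(η_1(x) ≥ c). Then the difference of cost-sensitive risks satisfies R_c(f_G) − R_c(f_{NG}) ≥ p_1 δ₁ δ₂ − 2(1 − p_1); in particular if p_1 > 2/(2 + δ₁δ₂) then R_c(f_G) > R_c(f_{NG}). -/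

import Mathlib

open MeasureTheory

lemma integrable_aux15 {X : Type*} [MeasurableSpace X] (μ : Measure X)
    [IsProbabilityMeasure μ] (c : ℝ) (hc : c ∈ Set.Ioo (0:ℝ) 1)
    (f η : X → ℝ) (hf : Measurable f) (hη : Measurable η)
    (hf01 : ∀ x, f x ∈ Set.Icc (0:ℝ) 1) (hη01 : ∀ x, η x ∈ Set.Icc (0:ℝ) 1) :
    Integrable (fun x => c * f x * (1 - η x) + (1 - c) * (1 - f x) * η x) μ := by
  apply Integrable.mono' (integrable_const (1:ℝ))
  · exact Measurable.aestronglyMeasurable (by fun_prop)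
  · filter_upwards with x
    obtain ⟨hf0, hf1⟩ := hf01 x
    obtain ⟨hη0, hη1⟩ := hη01 x
    obtain ⟨hc0, hc1⟩ := hc
    rw [Real.norm_eq_abs, abs_le]
    constructor <;> nlinarith

/-- Theorem 2's quantitative core: comparing a GWTR that rejects group-1 points with
`c < η₁ < t₁'` against the non-GWTR classifier thresholding group 1 at `c`. -/
theorem stmt_15 {X : Type*} [MeasurableSpace X]
    (μ₁ μ₀ : Measure X) [IsProbabilityMeasure μ₁] [IsProbabilityMeasure μ₀]
    (η₁ η₀ : X → ℝ) (hη₁m : Measurable η₁) (hη₀m : Measurable η₀)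
    (hη₁01 : ∀ x, η₁ x ∈ Set.Icc (0:ℝ) 1) (hη₀01 : ∀ x, η₀ x ∈ Set.Icc (0:ℝ) 1)
    (p₁ : ℝ) (hp₁0 : 0 < p₁) (hp₁1 : p₁ ≤ 1)
    (c : ℝ) (hc : c ∈ Set.Ioo (0:ℝ) 1)
    (δ₁ δ₂ : ℝ) (hδ₁ : 0 < δ₁) (hδ₂ : 0 < δ₂)
    (t₁ : ℝ) (ht₁ : c < t₁)
    (hmass : δ₂ ≤ (μ₁ {x | c + δ₁ < η₁ x ∧ η₁ x < t₁}).toReal)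
    (fG₁ fG₀ fNG₁ fNG₀ : X → ℝ)
    (hfG₁m : Measurable fG₁) (hfG₀m : Measurable fG₀)
    (hfG₁01 : ∀ x, fG₁ x ∈ Set.Icc (0:ℝ) 1) (hfG₀01 : ∀ x, fG₀ x ∈ Set.Icc (0:ℝ) 1)
    (t₁' : ℝ) (ht₁' : t₁ ≤ t₁')
    (hfG₁zero : ∀ x, c < η₁ x → η₁ x < t₁' → fG₁ x = 0)
    (hfNG₁ : ∀ x, fNG₁ x = Set.indicator {x | η₁ x ≥ c} 1 x)
    (hfNG₀m : Measurable fNG₀) (hfNG₀01 : ∀ x, fNG₀ x ∈ Set.Icc (0:ℝ) 1)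
    (R : (X → ℝ) → (X → ℝ) → ℝ)
    (hR : ∀ g₁ g₀ : X → ℝ,
      R g₁ g₀ = p₁ * ∫ x, (c * g₁ x * (1 - η₁ x) + (1 - c) * (1 - g₁ x) * η₁ x) ∂μ₁
        + (1 - p₁) * ∫ x, (c * g₀ x * (1 - η₀ x) + (1 - c) * (1 - g₀ x) * η₀ x) ∂μ₀) :
    p₁ * δ₁ * δ₂ - 2 * (1 - p₁) ≤ R fG₁ fG₀ - R fNG₁ fNG₀ ∧
    (2 / (2 + δ₁ * δ₂) < p₁ → R fNG₁ fNG₀ < R fG₁ fG₀) := by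
  obtain ⟨hc0, hc1⟩ := hc
  -- properties of fNG₁
  have hfNG₁m : Measurable fNG₁ := by
    have : fNG₁ = Set.indicator {x | η₁ x ≥ c} 1 := funext hfNG₁
    rw [this]
    exact Measurable.indicator measurable_const
      (measurableSet_le measurable_const hη₁m)
  have hfNG₁01 : ∀ x, fNG₁ x ∈ Set.Icc (0:ℝ) 1 := by
    intro x
    rw [hfNG₁ x]
    by_cases h : x ∈ {x | η₁ x ≥ c} <;>
      simp [Set.indicator_of_mem, Set.indicator_of_notMem, h]
  -- integrability
  have hIG1 := integrable_aux15 μ₁ c ⟨hc0, hc1⟩ fG₁ η₁ hfG₁m hη₁m hfG₁01 hη₁01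
  have hING1 := integrable_aux15 μ₁ c ⟨hc0, hc1⟩ fNG₁ η₁ hfNG₁m hη₁m hfNG₁01 hη₁01
  have hIG0 := integrable_aux15 μ₀ c ⟨hc0, hc1⟩ fG₀ η₀ hfG₀m hη₀m hfG₀01 hη₀01
  have hING0 := integrable_aux15 μ₀ c ⟨hc0, hc1⟩ fNG₀ η₀ hfNG₀m hη₀m hfNG₀01 hη₀01
  set S : Set X := {x | c + δ₁ < η₁ x ∧ η₁ x < t₁} with hS
  have hSm : MeasurableSet S :=
    (measurableSet_lt measurable_const hη₁m).inter (measurableSet_lt hη₁m measurable_const)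
  -- group 1 key inequality
  have key1 : δ₁ * δ₂ ≤
      (∫ x, (c * fG₁ x * (1 - η₁ x) + (1 - c) * (1 - fG₁ x) * η₁ x) ∂μ₁)
      - ∫ x, (c * fNG₁ x * (1 - η₁ x) + (1 - c) * (1 - fNG₁ x) * η₁ x) ∂μ₁ := by
    rw [← integral_sub hIG1 hING1]
    have hind : Integrable (S.indicator fun _ => δ₁) μ₁ :=
      (integrable_const δ₁).indicator hSm
    have hmono : ∀ x, (S.indicator fun _ => δ₁) x ≤
        (c * fG₁ x * (1 - η₁ x) + (1 - c) * (1 - fG₁ x) * η₁ x)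
        - (c * fNG₁ x * (1 - η₁ x) + (1 - c) * (1 - fNG₁ x) * η₁ x) := by
      intro x
      obtain ⟨hf0, hf1⟩ := hfG₁01 x
      obtain ⟨hη0, hη1⟩ := hη₁01 x
      by_cases hx : x ∈ S
      · obtain ⟨hx1, hx2⟩ := id hx
        have hηc : c < η₁ x := by linarith
        have hG0 : fG₁ x = 0 := hfG₁zero x hηc (by linarith)
        have hNG1 : fNG₁ x = 1 := by
          rw [hfNG₁ x]; simp [Set.indicator_apply, Set.mem_setOf_eq, le_of_lt hηc]
        rw [Set.indicator_of_mem hx]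
        rw [hG0, hNG1]
        nlinarith
      · rw [Set.indicator_of_notMem hx]
        by_cases hηc : c ≤ η₁ x
        · have hNG1 : fNG₁ x = 1 := by
            rw [hfNG₁ x]; simp [Set.indicator_apply, Set.mem_setOf_eq, hηc]
          rw [hNG1]; nlinarith
        · have hNG0 : fNG₁ x = 0 := by
            rw [hfNG₁ x]; simp [Set.indicator_apply, Set.mem_setOf_eq, hηc]
          rw [hNG0]; push_neg at hηc; nlinarith
    calc δ₁ * δ₂ ≤ δ₁ * (μ₁ S).toReal := by
          apply mul_le_mul_of_nonneg_left hmass hδ₁.le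
      _ = ∫ x, (S.indicator fun _ => δ₁) x ∂μ₁ := by
          rw [integral_indicator_const δ₁ hSm, smul_eq_mul, mul_comm]; rfl
      _ ≤ _ := integral_mono hind (hIG1.sub hING1) hmono
  -- group 0 bounds
  have hbound : ∀ (f η : X → ℝ), (∀ x, f x ∈ Set.Icc (0:ℝ) 1) →
      (∀ x, η x ∈ Set.Icc (0:ℝ) 1) →
      Integrable (fun x => c * f x * (1 - η x) + (1 - c) * (1 - f x) * η x) μ₀ →
      (0 ≤ ∫ x, (c * f x * (1 - η x) + (1 - c) * (1 - f x) * η x) ∂μ₀ ∧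
       ∫ x, (c * f x * (1 - η x) + (1 - c) * (1 - f x) * η x) ∂μ₀ ≤ 1) := by
    intro f η hf01 hη01 hint
    constructor
    · apply integral_nonneg
      intro x
      simp only [Pi.zero_apply]
      obtain ⟨hf0, hf1⟩ := hf01 x
      obtain ⟨hη0, hη1⟩ := hη01 x
      have h1 : 0 ≤ c * f x * (1 - η x) :=
        mul_nonneg (mul_nonneg hc0.le hf0) (by linarith)
      have h2 : 0 ≤ (1 - c) * (1 - f x) * η x :=
        mul_nonneg (mul_nonneg (by linarith) (by linarith)) hη0
      linarith
    · calc ∫ x, (c * f x * (1 - η x) + (1 - c) * (1 - f x) * η x) ∂μ₀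
          ≤ ∫ _x, (1:ℝ) ∂μ₀ := by
            apply integral_mono hint (integrable_const 1)
            intro x
            dsimp only
            obtain ⟨hf0, hf1⟩ := hf01 x
            obtain ⟨hη0, hη1⟩ := hη01 x
            nlinarith
        _ = 1 := by simp
  obtain ⟨hG0lo, hG0hi⟩ := hbound fG₀ η₀ hfG₀01 hη₀01 hIG0
  obtain ⟨hNG0lo, hNG0hi⟩ := hbound fNG₀ η₀ hfNG₀01 hη₀01 hING0
  have main : p₁ * δ₁ * δ₂ - 2 * (1 - p₁) ≤ R fG₁ fG₀ - R fNG₁ fNG₀ := by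
    rw [hR fG₁ fG₀, hR fNG₁ fNG₀]
    have h1p : (0:ℝ) ≤ 1 - p₁ := by linarith
    nlinarith [mul_le_mul_of_nonneg_left key1 hp₁0.le]
  refine ⟨main, fun hp => ?_⟩
  have hpos : (0:ℝ) < 2 + δ₁ * δ₂ := by positivity
  rw [div_lt_iff₀ hpos] at hp
  have : 0 < p₁ * δ₁ * δ₂ - 2 * (1 - p₁) := by nlinarith
  linarith
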